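/- Let γ > 1 and let v¹, v², c : O → ℝ be C¹ functions on an open set O ⊆ ℝ³ (coordinates (t,x₁,x₂)) with c > 0, satisfying the polytropic Euler momentum equations ∂_t vⁱ + v¹∂₁vⁱ + v²∂₂vⁱ = -(2c/(γ-1))·∂ᵢc for i = 1,2. Then at every point of O, the vorticity satisfies ∂₁v² - ∂₂v¹ = X̂¹·X̂(v²) - X̂²·X̂(v¹) + (2/(γ-1))·X̂(c) + c⁻¹·X̂¹·L(v¹) + c⁻¹·X̂²·L(v²). -/

import Mathlib

/-- `∂_t` of a function on `ℝ³ = ℝ × ℝ × ℝ` with coordinates `(t, x₁, x₂)`. -/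
noncomputable def pdt (f : ℝ × ℝ × ℝ → ℝ) (x : ℝ × ℝ × ℝ) : ℝ := fderiv ℝ f x (1, 0, 0)

/-- `∂₁` of a function on `ℝ³`. -/
noncomputable def pd1 (f : ℝ × ℝ × ℝ → ℝ) (x : ℝ × ℝ × ℝ) : ℝ := fderiv ℝ f x (0, 1, 0)

/-- `∂₂` of a function on `ℝ³`. -/
noncomputable def pd2 (f : ℝ × ℝ × ℝ → ℝ) (x : ℝ × ℝ × ℝ) : ℝ := fderiv ℝ f x (0, 0, 1)

/-- `X̂`-derivative: `X̂ f = X̂¹ ∂₁ f + X̂² ∂₂ f`. -/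
noncomputable def Xd (X1 X2 f : ℝ × ℝ × ℝ → ℝ) (x : ℝ × ℝ × ℝ) : ℝ :=
  X1 x * pd1 f x + X2 x * pd2 f x

/-- `T̂`-derivative, where `T̂¹ = -X̂²` and `T̂² = X̂¹`. -/
noncomputable def Td (X1 X2 f : ℝ × ℝ × ℝ → ℝ) (x : ℝ × ℝ × ℝ) : ℝ :=
  (-X2 x) * pd1 f x + X1 x * pd2 f x

/-- Material derivative `B f = ∂_t f + v¹ ∂₁ f + v² ∂₂ f`. -/
noncomputable def Bd (v1 v2 f : ℝ × ℝ × ℝ → ℝ) (x : ℝ × ℝ × ℝ) : ℝ :=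
  pdt f x + v1 x * pd1 f x + v2 x * pd2 f x

/-- Null derivative `L f = B f - c T̂ f`. -/
noncomputable def Ld (v1 v2 c X1 X2 f : ℝ × ℝ × ℝ → ℝ) (x : ℝ × ℝ × ℝ) : ℝ :=
  Bd v1 v2 f x - c x * Td X1 X2 f x

/-- **Reformulation of the vorticity in the first null frame**: for `C¹` solutions of the
polytropic Euler momentum equations, `∂₁v² - ∂₂v¹ = X̂¹ X̂(v²) - X̂² X̂(v¹) + (2/(γ-1)) X̂(c)
+ c⁻¹ X̂¹ L(v¹) + c⁻¹ X̂² L(v²)`. -/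
theorem stmt_1 (γ : ℝ) (hγ : 1 < γ)
    (O : Set (ℝ × ℝ × ℝ)) (hO : IsOpen O)
    (v1 v2 c : ℝ × ℝ × ℝ → ℝ)
    (hv1 : ContDiffOn ℝ 1 v1 O) (hv2 : ContDiffOn ℝ 1 v2 O) (hc : ContDiffOn ℝ 1 c O)
    (hcpos : ∀ x ∈ O, 0 < c x)
    (X1 X2 : ℝ × ℝ × ℝ → ℝ) (hX : ∀ x ∈ O, X1 x ^ 2 + X2 x ^ 2 = 1)
    (heuler1 : ∀ x ∈ O, Bd v1 v2 v1 x = -(2 * c x / (γ - 1)) * pd1 c x)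
    (heuler2 : ∀ x ∈ O, Bd v1 v2 v2 x = -(2 * c x / (γ - 1)) * pd2 c x) :
    ∀ x ∈ O,
      pd1 v2 x - pd2 v1 x
        = X1 x * Xd X1 X2 v2 x - X2 x * Xd X1 X2 v1 x
          + 2 / (γ - 1) * Xd X1 X2 c x
          + (c x)⁻¹ * X1 x * Ld v1 v2 c X1 X2 v1 x
          + (c x)⁻¹ * X2 x * Ld v1 v2 c X1 X2 v2 x := by
  intro x hx
  have h1 := heuler1 x hx
  have h2 := heuler2 x hx
  have hX1 := hX x hx
  have hcne : c x ≠ 0 := (hcpos x hx).ne'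
  have hγne : γ - 1 ≠ 0 := sub_ne_zero.mpr hγ.ne'
  simp only [Ld, Xd, Td, h1, h2]
  field_simp
  linear_combination (pd2 v1 x - pd1 v2 x) * (γ - 1) * hX1
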